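/- Fix β > 0 and η₀ ∈ (0, 1/2). For the DPO loss under label-flip noise on a point mass distribution, the noisy risk as a function of the margin Δ is g(Δ) = -(1-η₀)log σ(Δ) - η₀ log σ(-Δ), whose unique minimizer is Δ* = log((1-η₀)/η₀). If M = sup over the parameter space of Δ(θ) satisfies M > log((1-η₀)/η₀), i.e. η₀ ≥ 1/(1+e^M), then the noisy-risk minimizer differs from the clean-risk minimizer (which maximizes Δ). Hence the DPO loss is not noise-tolerant. -/

import Mathlib

/-- DPO is not noise-tolerant: with `η₀ ∈ (0,1/2)`, the noisy risk
`g(Δ) = -(1-η₀) log σ(Δ) - η₀ log σ(-Δ)` has unique minimizer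
`Δ* = log((1-η₀)/η₀)`; if the maximum `M` of the margin `Δ` over the compact
parameter space satisfies `M > log((1-η₀)/η₀)` (i.e. `η₀ > 1/(1+e^M)`), then
any noisy-risk minimizer (attaining `Δ*`) differs from any clean-risk
minimizer (which maximizes `Δ`). -/
theorem dpo_not_noise_tolerant (σ : ℝ → ℝ)
    (hσ : ∀ x, σ x = Real.exp x / (1 + Real.exp x))
    (β : ℝ) (hβ : 0 < β) (η₀ : ℝ) (hη : η₀ ∈ Set.Ioo (0 : ℝ) (1 / 2))
    (g : ℝ → ℝ)
    (hg : ∀ t, g t = -(1 - η₀) * Real.log (σ t) - η₀ * Real.log (σ (-t)))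
    {Θ : Type*} [TopologicalSpace Θ] [CompactSpace Θ]
    (Δ : Θ → ℝ) (hΔ : Continuous Δ) (M : ℝ) (hM : 0 < M)
    (hMub : ∀ θ, Δ θ ≤ M) (hMatt : ∃ θ, Δ θ = M)
    (hgt : Real.log ((1 - η₀) / η₀) < M) :
    (∀ t, t ≠ Real.log ((1 - η₀) / η₀) →
      g (Real.log ((1 - η₀) / η₀)) < g t) ∧
    (1 / (1 + Real.exp M) < η₀) ∧
    ∀ θstar θeta : Θ, Δ θstar = M → Δ θeta = Real.log ((1 - η₀) / η₀) →
      θstar ≠ θeta := by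
  obtain ⟨hη0, hη2⟩ := hη
  have hη1 : η₀ < 1 := by linarith
  set p : ℝ := (1 - η₀) / η₀ with hp
  have hp0 : 0 < p := div_pos (by linarith) hη0
  have h1p : 1 + p = η₀⁻¹ := by rw [hp]; field_simp; ring
  -- simplify g
  have hgsimp : ∀ t, g t = Real.log (1 + Real.exp t) - (1 - η₀) * t := by
    intro t
    have he : (0:ℝ) < Real.exp t := Real.exp_pos t
    have h1 : (0:ℝ) < 1 + Real.exp t := by linarith
    have hσ1 : Real.log (σ t) = t - Real.log (1 + Real.exp t) := by
      rw [hσ, Real.log_div he.ne' h1.ne', Real.log_exp]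
    have hσ2 : Real.log (σ (-t)) = - Real.log (1 + Real.exp t) := by
      have hval : σ (-t) = (1 + Real.exp t)⁻¹ := by
        rw [hσ, Real.exp_neg]
        field_simp
        ring
      rw [hval, Real.log_inv]
    rw [hg, hσ1, hσ2]; ring
  have key : ∀ t, t ≠ Real.log p → g (Real.log p) < g t := by
    intro t ht
    have he : (0:ℝ) < Real.exp t := Real.exp_pos t
    have h1 : (0:ℝ) < 1 + Real.exp t := by linarith
    set u : ℝ := Real.exp t with hu
    have hup : u / p ≠ 1 := by
      intro h
      apply ht
      have hupe : u = p := by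
        field_simp at h; linarith
      rw [← hupe, hu, Real.log_exp]
    have ha : (0:ℝ) < 1 - η₀ := by linarith
    have hb : (0:ℝ) < η₀ := hη0
    have hcon := strictConcaveOn_log_Ioi.2 (Set.mem_Ioi.mpr (div_pos he hp0))
      (Set.mem_Ioi.mpr one_pos) hup ha hb (by ring)
    simp only [smul_eq_mul, mul_one, Real.log_one] at hcon
    -- hcon : (1-η₀) * log (u/p) + η₀ * 0 < log ((1-η₀) * (u/p) + η₀)
    have harg : (1 - η₀) * (u / p) + η₀ = η₀ * (1 + u) := by
      rw [hp]; field_simp; ring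
    rw [harg, Real.log_mul hη0.ne' (by linarith),
      Real.log_div he.ne' hp0.ne', Real.log_exp] at hcon
    have hlogp : Real.log (1 + p) = - Real.log η₀ := by
      rw [h1p, Real.log_inv]
    rw [hgsimp, hgsimp, Real.exp_log hp0, hlogp]
    linarith
  refine ⟨key, ?_, ?_⟩
  · have hplt : p < Real.exp M := by
      calc p = Real.exp (Real.log p) := (Real.exp_log hp0).symm
        _ < Real.exp M := Real.exp_lt_exp.2 hgt
    have h1e : (0:ℝ) < 1 + Real.exp M := by positivity
    rw [div_lt_iff₀ h1e]
    have := (div_lt_iff₀ hη0).mp hplt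
    nlinarith
  · intro θstar θeta hstar heta heq
    rw [heq, heta] at hstar
    exact absurd hstar (ne_of_lt hgt)
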